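/- If t ∈ H_0(K̃_b) has persistence interval (b, d) in H_0(K̃_•) with d ≤ n finite, then there exists a 0-chain c of vertices of K_b, at least one of which lies in V_b ∖ V_{b−1}, such that the class t equals the class of c in H_0(K̃_b), and such that the class s = ⟨c⟩ ∈ H_0(K_b) satisfies θ_{0,b}(s) = t and has persistence interval (b, d) in H_0(K_•). -/

import Mathlib

/-- An abstract simplicial complex on a vertex type `α`: a collection of nonempty
finite subsets of `α` closed under passing to nonempty subsets. -/
structure AbsSC (α : Type) where
  faces : Set (Finset α)
  not_empty_mem : ∅ ∉ faces
  down_closed : ∀ {s t : Finset α}, s ∈ faces → t ⊆ s → t.Nonempty → t ∈ faces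

namespace AbsSC

variable {α : Type}

/-- The vertex set of an abstract simplicial complex. -/
def vertexSet (K : AbsSC α) : Set α := {v | {v} ∈ K.faces}

/-- The type of `q`-simplices (faces with `q+1` vertices). -/
def simplices (K : AbsSC α) (q : ℕ) : Type :=
  {s : Finset α // s ∈ K.faces ∧ s.card = q + 1}

/-- The space of `q`-chains over `ℤ/2`: formal sums of `q`-simplices. -/
abbrev Chain (K : AbsSC α) (q : ℕ) : Type := K.simplices q →₀ ZMod 2

/-- The sum of the `q`-dimensional faces of a `(q+1)`-simplex. -/
noncomputable def faceChain (K : AbsSC α) (q : ℕ) (s : K.simplices (q + 1)) : K.Chain q :=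
  ∑ t ∈ (s.1.powersetCard (q + 1)).attach,
    Finsupp.single
      ⟨t.1, by
        obtain ⟨hsub, hcard⟩ := Finset.mem_powersetCard.mp t.2
        refine ⟨K.down_closed s.2.1 hsub ?_, hcard⟩
        rw [← Finset.card_pos, hcard]
        omega⟩
      (1 : ZMod 2)

/-- The boundary map `∂_{q+1} : C_{q+1}(K) → C_q(K)`, sending each `(q+1)`-simplex to
the sum of its `q`-dimensional faces. -/
noncomputable def boundary (K : AbsSC α) (q : ℕ) :
    K.Chain (q + 1) →ₗ[ZMod 2] K.Chain q :=
  Finsupp.lsum (ZMod 2) fun s => LinearMap.toSpanSingleton (ZMod 2) (K.Chain q) (K.faceChain q s)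

/-- The cycle subspace: `ker ∂_q` (all of `C_0` in degree `0`). -/
noncomputable def cycles (K : AbsSC α) : (q : ℕ) → Submodule (ZMod 2) (K.Chain q)
  | 0 => ⊤
  | q + 1 => LinearMap.ker (K.boundary q)

/-- The boundaries, viewed as a submodule of the cycles. -/
noncomputable def boundariesIn (K : AbsSC α) (q : ℕ) :
    Submodule (ZMod 2) (K.cycles q) :=
  Submodule.comap (K.cycles q).subtype (LinearMap.range (K.boundary q))

/-- The `q`-th simplicial homology over `ℤ/2`: `H_q(K) = ker ∂_q / im ∂_{q+1}`. -/
def Homology (K : AbsSC α) (q : ℕ) : Type :=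
  (K.cycles q) ⧸ (K.boundariesIn q)

noncomputable instance (K : AbsSC α) (q : ℕ) : AddCommGroup (K.Homology q) :=
  inferInstanceAs (AddCommGroup ((K.cycles q) ⧸ (K.boundariesIn q)))

noncomputable instance (K : AbsSC α) (q : ℕ) : Module (ZMod 2) (K.Homology q) :=
  inferInstanceAs (Module (ZMod 2) ((K.cycles q) ⧸ (K.boundariesIn q)))

/-- The homology class of a cycle. -/
noncomputable def hClass (K : AbsSC α) (q : ℕ) (c : K.Chain q) (hc : c ∈ K.cycles q) :
    K.Homology q :=
  Submodule.Quotient.mk ⟨c, hc⟩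

/-- The chain map induced by an inclusion of simplicial complexes. -/
noncomputable def chainMap (K L : AbsSC α) (h : K.faces ⊆ L.faces) (q : ℕ) :
    K.Chain q →ₗ[ZMod 2] L.Chain q :=
  Finsupp.lmapDomain (ZMod 2) (ZMod 2) fun s : K.simplices q =>
    (⟨s.1, h s.2.1, s.2.2⟩ : L.simplices q)

/-- `θ` is the map on `q`-th homology induced by the inclusion `K ⊆ L`: it sends the
class of every cycle `c` of `K` to the class of the image chain of `c` in `L`. -/
def InducedHom (K L : AbsSC α) (q : ℕ)
    (θ : K.Homology q →ₗ[ZMod 2] L.Homology q) : Prop :=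
  ∃ h : K.faces ⊆ L.faces,
    ∀ (c : K.Chain q) (hc : c ∈ K.cycles q),
      ∃ hc' : chainMap K L h q c ∈ L.cycles q,
        θ (K.hClass q c hc) = L.hClass q (chainMap K L h q c) hc'

end AbsSC

/-- The faces of the gluing stars `S = S_1 ⊔ ⋯ ⊔ S_k`: for each `j`, the vertex `{z j}`,
the vertices `{v}` for `v ∈ P j`, and the edges `{z j, v}` for `v ∈ P j`. -/
def starFaces {α : Type} [DecidableEq α] {k : ℕ} (P : Fin k → Set α) (z : Fin k → α) :
    Set (Finset α) :=
  {s | ∃ j : Fin k, s = {z j} ∨ ∃ v ∈ P j, s = {v} ∨ s = {z j, v}}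

section Tower

variable {W : ℕ → Type} [∀ i, AddCommGroup (W i)] [∀ i, Module (ZMod 2) (W i)]

/-- The composite `φ_{i,j} = φ_{j-1} ∘ ⋯ ∘ φ_i` of the connecting maps of a tower
(the identity when `i = j`). -/
noncomputable def comps (φ : ∀ i, W i →ₗ[ZMod 2] W (i + 1)) {i j : ℕ} (h : i ≤ j) :
    W i →ₗ[ZMod 2] W j :=
  Nat.leRecOn (C := fun m => W i →ₗ[ZMod 2] W m) h (fun {m} g => (φ m).comp g) LinearMap.id

/-- `s ∈ W b` has persistence interval `(b, d)` with finite death `d ∈ {b+1, …, n}`: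
`s ∉ im φ_{b-1}`, `φ_{b,d'}(s) ∉ im φ_{b-1,d'}` for all `b ≤ d' < d`, and
`φ_{b,d}(s) ∈ im φ_{b-1,d}`. -/
def HasPersIntervalFin (φ : ∀ i, W i →ₗ[ZMod 2] W (i + 1)) (n b d : ℕ) (s : W b) : Prop :=
  ∃ (_ : 1 ≤ b) (hbd : b < d) (_ : d ≤ n),
    s ∉ LinearMap.range (comps φ (Nat.sub_le b 1)) ∧
    (∀ (d' : ℕ) (hd' : b ≤ d'), d' < d →
      comps φ hd' s ∉ LinearMap.range (comps φ (Nat.le_trans (Nat.sub_le b 1) hd'))) ∧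
    comps φ (Nat.le_of_lt hbd) s ∈
      LinearMap.range (comps φ (Nat.le_trans (Nat.sub_le b 1) (Nat.le_of_lt hbd)))

/-- `s ∈ W b` has persistence interval `(b, ∞)`: `s ∉ im φ_{b-1}` and
`φ_{b,d'}(s) ∉ im φ_{b-1,d'}` for all `b ≤ d' ≤ n`. -/
def HasPersIntervalInf (φ : ∀ i, W i →ₗ[ZMod 2] W (i + 1)) (n b : ℕ) (s : W b) : Prop :=
  ∃ _ : 1 ≤ b,
    s ∉ LinearMap.range (comps φ (Nat.sub_le b 1)) ∧
    ∀ (d' : ℕ) (hd' : b ≤ d'), d' ≤ n →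
      comps φ hd' s ∉ LinearMap.range (comps φ (Nat.le_trans (Nat.sub_le b 1) hd'))

end Tower

namespace AbsSC

variable {α : Type}

/-! ### Auxiliary lemmas -/

lemma char2 {M : Type*} [AddCommGroup M] [Module (ZMod 2) M] (x : M) : x + x = 0 := by
  have h : x + x = (2 : ZMod 2) • x := by rw [two_smul]
  rw [h, show (2 : ZMod 2) = 0 from rfl, zero_smul]

lemma char2_sub {M : Type*} [AddCommGroup M] [Module (ZMod 2) M] (x y : M) : x - y = x + y := by
  rw [sub_eq_add_neg, neg_eq_of_add_eq_zero_left (char2 y)]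

lemma char2_cancel {M : Type*} [AddCommGroup M] [Module (ZMod 2) M] {x y w : M}
    (h : x + y = w) : x = w + y := by
  rw [← h, add_assoc, char2, add_zero]

/-- The simplex map induced by an inclusion. -/
def smap (K L : AbsSC α) (h : K.faces ⊆ L.faces) (q : ℕ) : K.simplices q → L.simplices q :=
  fun s => ⟨s.1, h s.2.1, s.2.2⟩

lemma smap_injective (K L : AbsSC α) (h : K.faces ⊆ L.faces) (q : ℕ) :
    Function.Injective (smap K L h q) :=
  fun a b hab => Subtype.ext (show a.1 = b.1 from congrArg (fun x => x.1) hab)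

lemma chainMap_eq (K L : AbsSC α) (h : K.faces ⊆ L.faces) (q : ℕ) (c : K.Chain q) :
    chainMap K L h q c = Finsupp.mapDomain (smap K L h q) c :=
  Finsupp.lmapDomain_apply _ _ _ _

lemma chainMap_injective (K L : AbsSC α) (h : K.faces ⊆ L.faces) (q : ℕ) :
    Function.Injective (chainMap K L h q) := by
  intro a b hab
  rw [chainMap_eq, chainMap_eq] at hab
  exact Finsupp.mapDomain_injective (smap_injective K L h q) hab

lemma chainMap_chainMap (K L M : AbsSC α) (h1 : K.faces ⊆ L.faces) (h2 : L.faces ⊆ M.faces)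
    (q : ℕ) (c : K.Chain q) :
    chainMap L M h2 q (chainMap K L h1 q c) = chainMap K M (h1.trans h2) q c := by
  rw [chainMap_eq, chainMap_eq, chainMap_eq]
  have hf : (smap L M h2 q) ∘ (smap K L h1 q) = smap K M (h1.trans h2) q :=
    funext fun s => Subtype.ext rfl
  rw [← hf, Finsupp.mapDomain_comp]

lemma chainMap_self (K : AbsSC α) (h : K.faces ⊆ K.faces) (q : ℕ) (c : K.Chain q) :
    chainMap K K h q c = c := by
  rw [chainMap_eq]
  have hf : smap K K h q = id := funext fun s => Subtype.ext rfl
  rw [hf, Finsupp.mapDomain_id]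

lemma mem_cycles_zero (K : AbsSC α) (c : K.Chain 0) : c ∈ K.cycles 0 :=
  Submodule.mem_top

lemma exists_preimage_chain (K L : AbsSC α) (h : K.faces ⊆ L.faces) (q : ℕ) (c : L.Chain q)
    (hs : ∀ σ ∈ c.support, σ.1 ∈ K.faces) :
    ∃ c₀ : K.Chain q, chainMap K L h q c₀ = c := by
  refine ⟨Finsupp.comapDomain (smap K L h q) c ((smap_injective K L h q).injOn), ?_⟩
  rw [chainMap_eq]
  refine Finsupp.mapDomain_comapDomain _ (smap_injective K L h q) c ?_
  intro σ hσ
  exact ⟨⟨σ.1, hs σ hσ, σ.2.2⟩, Subtype.ext rfl⟩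

lemma hClass_add (K : AbsSC α) (q : ℕ) (c c' : K.Chain q) (hc : c ∈ K.cycles q)
    (hc' : c' ∈ K.cycles q) (hcc : c + c' ∈ K.cycles q) :
    K.hClass q (c + c') hcc = K.hClass q c hc + K.hClass q c' hc' := by
  show Submodule.Quotient.mk _ = _
  rw [show (⟨c + c', hcc⟩ : K.cycles q) = ⟨c, hc⟩ + ⟨c', hc'⟩ from rfl]
  exact Submodule.Quotient.mk_add _

lemma hClass_eq_iff (K : AbsSC α) (q : ℕ) (c c' : K.Chain q) (hc : c ∈ K.cycles q)
    (hc' : c' ∈ K.cycles q) :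
    K.hClass q c hc = K.hClass q c' hc' ↔ c + c' ∈ LinearMap.range (K.boundary q) := by
  rw [hClass, hClass]
  show (Submodule.Quotient.mk ⟨c, hc⟩ : (K.cycles q) ⧸ (K.boundariesIn q)) =
    Submodule.Quotient.mk ⟨c', hc'⟩ ↔ _
  rw [Submodule.Quotient.eq]
  have : (⟨c, hc⟩ : K.cycles q) - ⟨c', hc'⟩ = ⟨c - c', sub_mem hc hc'⟩ := rfl
  rw [this]
  rw [boundariesIn, Submodule.mem_comap]
  rw [show (K.cycles q).subtype ⟨c - c', sub_mem hc hc'⟩ = c - c' from rfl, char2_sub]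

lemma hClass_eq_zero_iff (K : AbsSC α) (q : ℕ) (c : K.Chain q) (hc : c ∈ K.cycles q) :
    K.hClass q c hc = 0 ↔ c ∈ LinearMap.range (K.boundary q) := by
  have h0 : (0 : K.Homology q) = K.hClass q 0 (zero_mem _) := by
    show _ = Submodule.Quotient.mk _
    rw [show (⟨(0 : K.Chain q), zero_mem _⟩ : K.cycles q) = 0 from rfl,
      Submodule.Quotient.mk_zero _]
    rfl
  rw [h0, hClass_eq_iff, add_zero]

lemma hClass_surjective (K : AbsSC α) (q : ℕ) (t : K.Homology q) :
    ∃ (c : K.Chain q) (hc : c ∈ K.cycles q), K.hClass q c hc = t := by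
  obtain ⟨⟨c, hc⟩, rfl⟩ := Submodule.Quotient.mk_surjective _ t
  exact ⟨c, hc, rfl⟩

lemma boundary_single (K : AbsSC α) (q : ℕ) (s : K.simplices (q+1)) (a : ZMod 2) :
    K.boundary q (Finsupp.single s a) = a • K.faceChain q s := by
  rw [boundary, Finsupp.lsum_single, LinearMap.toSpanSingleton_apply]

lemma faceChain_pair [DecidableEq α] (K : AbsSC α) (s : K.simplices 1) {a b : α} (hab : a ≠ b)
    (hs : s.1 = {a, b}) (σa σb : K.simplices 0) (hσa : σa.1 = {a}) (hσb : σb.1 = {b}) :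
    K.faceChain 0 s = Finsupp.single σa 1 + Finsupp.single σb 1 := by
  classical
  have h1 : K.faceChain 0 s = ∑ t ∈ (s.1.powersetCard (0+1)).attach,
      (if h' : (t : Finset α) ∈ K.faces ∧ (t : Finset α).card = 0 + 1 then
        Finsupp.single (⟨t, h'⟩ : K.simplices 0) (1:ZMod 2) else 0) := by
    rw [faceChain]
    refine Finset.sum_congr rfl (fun t ht => ?_)
    have hc : (t : Finset α) ∈ K.faces ∧ (t : Finset α).card = 0 + 1 := by
      obtain ⟨hsub, hcard⟩ := Finset.mem_powersetCard.mp t.2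
      exact ⟨K.down_closed s.2.1 hsub (by rw [← Finset.card_pos, hcard]; omega), hcard⟩
    rw [dif_pos hc]
    rfl
  rw [h1, Finset.sum_attach (s.1.powersetCard (0+1)) (fun t =>
      (if h' : t ∈ K.faces ∧ t.card = 0 + 1 then
        Finsupp.single (⟨t, h'⟩ : K.simplices 0) (1:ZMod 2) else 0))]
  have h2 : s.1.powersetCard (0+1) = Finset.map ⟨singleton, fun x y => by simp⟩ ({a, b} : Finset α) := by
    rw [show (0+1) = 1 from rfl, Finset.powersetCard_one, hs]
  rw [h2, Finset.sum_map]
  have hmem : ∀ v ∈ s.1, ({v} : Finset α) ∈ K.faces ∧ ({v} : Finset α).card = 0 + 1 :=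
    fun v hv => ⟨K.down_closed s.2.1 (Finset.singleton_subset_iff.mpr hv)
      (Finset.singleton_nonempty v), Finset.card_singleton v⟩
  have hamem : a ∈ s.1 := by rw [hs]; simp
  have hbmem : b ∈ s.1 := by rw [hs]; simp
  rw [Finset.sum_pair hab]
  show (if h' : ({a} : Finset α) ∈ K.faces ∧ ({a} : Finset α).card = 0 + 1 then
        Finsupp.single (⟨{a}, h'⟩ : K.simplices 0) (1:ZMod 2) else 0) +
      (if h' : ({b} : Finset α) ∈ K.faces ∧ ({b} : Finset α).card = 0 + 1 then
        Finsupp.single (⟨{b}, h'⟩ : K.simplices 0) (1:ZMod 2) else 0) = _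
  rw [dif_pos (hmem a hamem), dif_pos (hmem b hbmem)]
  congr 1
  · exact congrArg (fun σ => Finsupp.single σ (1:ZMod 2)) (Subtype.ext hσa.symm)
  · exact congrArg (fun σ => Finsupp.single σ (1:ZMod 2)) (Subtype.ext hσb.symm)

lemma boundary_single_edge [DecidableEq α] (K : AbsSC α) (s : K.simplices 1) {a b : α} (hab : a ≠ b)
    (hs : s.1 = {a, b}) (σa σb : K.simplices 0) (hσa : σa.1 = {a}) (hσb : σb.1 = {b}) :
    K.boundary 0 (Finsupp.single s 1) = Finsupp.single σa 1 + Finsupp.single σb 1 := by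
  rw [boundary_single, one_smul, faceChain_pair K s hab hs σa σb hσa hσb]

lemma chainMap_faceChain (K L : AbsSC α) (h : K.faces ⊆ L.faces) (s : K.simplices 1) :
    chainMap K L h 0 (K.faceChain 0 s) = L.faceChain 0 (smap K L h 1 s) := by
  rw [faceChain, map_sum, faceChain]
  refine Finset.sum_congr rfl (fun t ht => ?_)
  rw [chainMap_eq]
  exact Finsupp.mapDomain_single.trans
    (congrArg (fun σ => Finsupp.single σ (1 : ZMod 2)) (Subtype.ext rfl))

lemma boundary_chainMap (K L : AbsSC α) (h : K.faces ⊆ L.faces) (e : K.Chain 1) :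
    L.boundary 0 (chainMap K L h 1 e) = chainMap K L h 0 (K.boundary 0 e) := by
  induction e using Finsupp.induction_linear with
  | zero => simp
  | add f g hf hg => simp only [map_add, hf, hg]
  | single s a =>
    rw [chainMap_eq, Finsupp.mapDomain_single, boundary_single, boundary_single, map_smul,
      chainMap_faceChain]

lemma homology_subsingleton (K : AbsSC α) (hK : K.faces = ∅) (q : ℕ) :
    Subsingleton (K.Homology q) := by
  have he : IsEmpty (K.simplices q) :=
    ⟨fun s => Set.notMem_empty s.1 (hK ▸ s.2.1)⟩
  have hch : Subsingleton (K.Chain q) := ⟨fun f g => Finsupp.ext fun a => (he.false a).elim⟩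
  have hcy : Subsingleton (K.cycles q) := ⟨fun x y => Subtype.ext (Subsingleton.elim _ _)⟩
  refine ⟨fun x y => ?_⟩
  obtain ⟨x', rfl⟩ := Submodule.Quotient.mk_surjective (K.boundariesIn q) x
  obtain ⟨y', rfl⟩ := Submodule.Quotient.mk_surjective (K.boundariesIn q) y
  rw [Subsingleton.elim x' y']

end AbsSC


lemma starFaces_card_one {α : Type} [DecidableEq α] {k : ℕ} {P : Fin k → Set α}
    {z : Fin k → α} {s : Finset α} (hs : s ∈ starFaces P z) (h1 : s.card = 1) :
    (∃ j, s = {z j}) ∨ (∃ j, ∃ v ∈ P j, s = {v}) := by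
  obtain ⟨j, hj | ⟨v, hv, hj | hj⟩⟩ := hs
  · exact Or.inl ⟨j, hj⟩
  · exact Or.inr ⟨j, v, hv, hj⟩
  · subst hj
    have hzv : z j = v := by
      by_contra hne
      rw [Finset.card_insert_of_notMem (by simp [hne]), Finset.card_singleton] at h1
      omega
    exact Or.inr ⟨j, v, hv, by rw [hzv]; simp⟩

lemma starFaces_card_two {α : Type} [DecidableEq α] {k : ℕ} {P : Fin k → Set α}
    {z : Fin k → α} {s : Finset α} (hs : s ∈ starFaces P z) (h2 : s.card = 2) :
    ∃ j, ∃ v ∈ P j, s = {z j, v} ∧ z j ≠ v := by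
  obtain ⟨j, hj | ⟨v, hv, hj | hj⟩⟩ := hs
  · subst hj; simp at h2
  · subst hj; simp at h2
  · refine ⟨j, v, hv, hj, ?_⟩
    intro hzv
    rw [hj, hzv] at h2
    simp at h2

section TowerAux2

variable {W : ℕ → Type} [∀ i, AddCommGroup (W i)] [∀ i, Module (ZMod 2) (W i)]

lemma comps_self (φ : ∀ i, W i →ₗ[ZMod 2] W (i + 1)) {i : ℕ} (h : i ≤ i) :
    comps φ h = LinearMap.id := Nat.leRecOn_self _

lemma comps_succ (φ : ∀ i, W i →ₗ[ZMod 2] W (i + 1)) {i j : ℕ} (h1 : i ≤ j) (h2 : i ≤ j + 1) :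
    comps φ h2 = (φ j).comp (comps φ h1) := Nat.leRecOn_succ h1 _

lemma comps_comps (φ : ∀ i, W i →ₗ[ZMod 2] W (i + 1)) {i j l : ℕ} (h1 : i ≤ j) (h2 : j ≤ l)
    (x : W i) : comps φ h2 (comps φ h1 x) = comps φ (h1.trans h2) x := by
  induction l, h2 using Nat.le_induction with
  | base => rw [comps_self]; rfl
  | succ l hl ih =>
    rw [comps_succ φ hl, comps_succ φ (h1.trans hl)]
    simp only [LinearMap.comp_apply, ih]

end TowerAux2

namespace AbsSC

lemma hClass_congr (K : AbsSC α') (q : ℕ) {c c' : K.Chain q} (h : c = c')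
    (hc : c ∈ K.cycles q) (hc' : c' ∈ K.cycles q) :
    K.hClass q c hc = K.hClass q c' hc' := by subst h; rfl

end AbsSC

open AbsSC

lemma faces_mono {α : Type} (n : ℕ) (K : ℕ → AbsSC α)
    (hKmono : ∀ i, i < n → (K i).faces ⊆ (K (i+1)).faces)
    {i j : ℕ} (hij : i ≤ j) (hjn : j ≤ n) : (K i).faces ⊆ (K j).faces := by
  revert hjn
  induction j, hij using Nat.le_induction with
  | base => intro _; exact subset_rfl
  | succ j hj ih => intro h; exact (ih (by omega)).trans (hKmono j (by omega))

lemma nat_theta {α : Type} (n : ℕ) (K Kt : ℕ → AbsSC α)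
    (φ : ∀ i, (K i).Homology 0 →ₗ[ZMod 2] (K (i+1)).Homology 0)
    (ψ : ∀ i, (Kt i).Homology 0 →ₗ[ZMod 2] (Kt (i+1)).Homology 0)
    (θ : ∀ i, (K i).Homology 0 →ₗ[ZMod 2] (Kt i).Homology 0)
    (hsq : ∀ i, i < n → (θ (i + 1)).comp (φ i) = (ψ i).comp (θ i))
    {i j : ℕ} (hij : i ≤ j) (hjn : j ≤ n) (x : (K i).Homology 0) :
    θ j (comps φ hij x) = comps ψ hij (θ i x) := by
  revert hjn
  induction j, hij using Nat.le_induction with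
  | base => intro _; rw [comps_self, comps_self]; rfl
  | succ j hj ih =>
    intro hjn
    rw [comps_succ φ hj, comps_succ ψ hj]
    simp only [LinearMap.comp_apply]
    rw [← ih (by omega)]
    exact LinearMap.congr_fun (hsq j (by omega)) _

lemma comps_hClass {α : Type} (n : ℕ) (K : ℕ → AbsSC α)
    (hKmono : ∀ i, i < n → (K i).faces ⊆ (K (i+1)).faces)
    (φ : ∀ i, (K i).Homology 0 →ₗ[ZMod 2] (K (i+1)).Homology 0)
    (hφ : ∀ i, i < n → InducedHom (K i) (K (i+1)) 0 (φ i))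
    {i j : ℕ} (hij : i ≤ j) (hjn : j ≤ n) (c : (K i).Chain 0) :
    comps φ hij ((K i).hClass 0 c (mem_cycles_zero _ _)) =
      (K j).hClass 0 (chainMap (K i) (K j) (faces_mono n K hKmono hij hjn) 0 c)
        (mem_cycles_zero _ _) := by
  revert hjn
  induction j, hij using Nat.le_induction with
  | base =>
    intro _
    rw [comps_self]
    exact (hClass_congr (K i) 0 (chainMap_self (K i) _ 0 c) _ _).symm
  | succ j hj ih =>
    intro hjn
    rw [comps_succ φ hj]
    simp only [LinearMap.comp_apply]
    rw [ih (by omega)]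
    obtain ⟨hsubφ, hφspec⟩ := hφ j (by omega)
    obtain ⟨hc', hspec⟩ := hφspec (chainMap (K i) (K j) (faces_mono n K hKmono hj (by omega)) 0 c)
      (mem_cycles_zero _ _)
    calc φ j ((K j).hClass 0 (chainMap (K i) (K j) (faces_mono n K hKmono hj (by omega)) 0 c)
          (mem_cycles_zero _ _))
        = (K (j+1)).hClass 0 (chainMap (K j) (K (j+1)) hsubφ 0
            (chainMap (K i) (K j) (faces_mono n K hKmono hj (by omega)) 0 c)) hc' := hspec
      _ = (K (j+1)).hClass 0 (chainMap (K i) (K (j+1))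
            (faces_mono n K hKmono (Nat.le_succ_of_le hj) hjn) 0 c) (mem_cycles_zero _ _) := by
          refine hClass_congr _ 0 ?_ _ _
          rw [chainMap_chainMap]

lemma theta_surj {α : Type} [DecidableEq α] (n : ℕ) {k : ℕ} (K Kt : ℕ → AbsSC α)
    (hKmono : ∀ i, i < n → (K i).faces ⊆ (K (i+1)).faces)
    (P : Fin k → Set α) (hPne : ∀ j, (P j).Nonempty)
    (hPunion : (⋃ j, P j) = (K 1).vertexSet)
    (z : Fin k → α)
    (hznew : ∀ (j : Fin k) (i : ℕ), i ≤ n → z j ∉ (K i).vertexSet)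
    (hKt : ∀ i, 1 ≤ i → i ≤ n → (Kt i).faces = (K i).faces ∪ starFaces P z)
    (θ : ∀ i, (K i).Homology 0 →ₗ[ZMod 2] (Kt i).Homology 0)
    (hθ : ∀ i, i ≤ n → InducedHom (K i) (Kt i) 0 (θ i))
    {i : ℕ} (h1i : 1 ≤ i) (hin : i ≤ n) (t : (Kt i).Homology 0) :
    ∃ c : (K i).Chain 0, θ i ((K i).hClass 0 c (mem_cycles_zero _ _)) = t := by
  classical
  have hsub : (K i).faces ⊆ (Kt i).faces := by
    rw [hKt i h1i hin]; exact Set.subset_union_left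
  have hP1 : ∀ j0 : Fin k, ∀ v ∈ P j0, {v} ∈ (K i).faces := by
    intro j0 v hv
    have hv1 : v ∈ (K 1).vertexSet := by
      rw [← hPunion]; exact Set.mem_iUnion.mpr ⟨j0, hv⟩
    exact faces_mono n K hKmono h1i hin hv1
  have hz1 : ∀ j0 : Fin k, z j0 ∉ (K 1).vertexSet := fun j0 => hznew j0 1 (le_trans h1i hin)
  have key : ∀ r : (Kt i).Chain 0, ∃ c : (K i).Chain 0,
      (Kt i).hClass 0 r (mem_cycles_zero _ _) =
      (Kt i).hClass 0 (chainMap (K i) (Kt i) hsub 0 c) (mem_cycles_zero _ _) := by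
    intro r
    induction r using Finsupp.induction_linear with
    | zero => exact ⟨0, hClass_congr _ 0 (by rw [map_zero]) _ _⟩
    | add f g hf hg =>
      obtain ⟨cf, hcf⟩ := hf; obtain ⟨cg, hcg⟩ := hg
      refine ⟨cf + cg, ?_⟩
      rw [hClass_add (Kt i) 0 f g (mem_cycles_zero _ _) (mem_cycles_zero _ _)
        (mem_cycles_zero _ _), hcf, hcg]
      exact ((hClass_add (Kt i) 0 _ _ (mem_cycles_zero _ _) (mem_cycles_zero _ _)
        (mem_cycles_zero _ _)).symm).trans (hClass_congr _ 0 (map_add _ cf cg).symm _ _)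
    | single σ a =>
      by_cases hσK : σ.1 ∈ (K i).faces
      · refine ⟨Finsupp.single ⟨σ.1, hσK, σ.2.2⟩ a, ?_⟩
        refine hClass_congr _ 0 ?_ _ _
        rw [chainMap_eq]
        erw [Finsupp.mapDomain_single]
        exact (congrArg (fun τ => Finsupp.single τ a) (Subtype.ext rfl)).symm
      · have hσstar : σ.1 ∈ starFaces P z := by
          have h2 : σ.1 ∈ (K i).faces ∪ starFaces P z := by
            rw [← hKt i h1i hin]; exact σ.2.1
          exact h2.resolve_left hσK
        obtain ⟨j0, hj0⟩ : ∃ j0, σ.1 = {z j0} := by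
          rcases starFaces_card_one hσstar σ.2.2 with h | ⟨j0, v, hv, hveq⟩
          · exact h
          · exact absurd (hveq ▸ hP1 j0 v hv) hσK
        obtain ⟨w, hw⟩ := hPne j0
        have hwK : {w} ∈ (K i).faces := hP1 j0 w hw
        have hzw : z j0 ≠ w := by
          intro h
          exact hz1 j0 (h ▸ (show w ∈ (K 1).vertexSet by
            rw [← hPunion]; exact Set.mem_iUnion.mpr ⟨j0, hw⟩))
        have hedge : ({z j0, w} : Finset α) ∈ (Kt i).faces := by
          rw [hKt i h1i hin]; exact Or.inr ⟨j0, Or.inr ⟨w, hw, Or.inr rfl⟩⟩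
        have hedgecard : ({z j0, w} : Finset α).card = 2 := by
          rw [Finset.card_insert_of_notMem (by simp [hzw]), Finset.card_singleton]
        refine ⟨Finsupp.single ⟨{w}, hwK, Finset.card_singleton w⟩ a, ?_⟩
        rw [hClass_eq_iff]
        rw [chainMap_eq]
        erw [Finsupp.mapDomain_single]
        refine ⟨Finsupp.single ⟨{z j0, w}, hedge, hedgecard⟩ a, ?_⟩
        erw [boundary_single]
        rw [faceChain_pair (Kt i) ⟨{z j0, w}, hedge, hedgecard⟩ hzw rfl
          σ (smap (K i) (Kt i) hsub 0 ⟨{w}, hwK, Finset.card_singleton w⟩) hj0 rfl]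
        rw [smul_add, Finsupp.smul_single, Finsupp.smul_single, smul_eq_mul, mul_one]
  obtain ⟨r, hr, hrt⟩ := hClass_surjective (Kt i) 0 t
  obtain ⟨c, hc⟩ := key r
  obtain ⟨hsubθ, hθspec⟩ := hθ i hin
  obtain ⟨hc', hspec⟩ := hθspec c (mem_cycles_zero _ _)
  refine ⟨c, ?_⟩
  rw [hspec, ← hrt]
  exact hc.symm

lemma kernel_fact {α : Type} [DecidableEq α] (n : ℕ) {k : ℕ} (K Kt : ℕ → AbsSC α)
    (hKmono : ∀ i, i < n → (K i).faces ⊆ (K (i+1)).faces)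
    (hKtmono : ∀ i, i < n → (Kt i).faces ⊆ (Kt (i+1)).faces)
    (P : Fin k → Set α)
    (hPunion : (⋃ j, P j) = (K 1).vertexSet)
    (z : Fin k → α)
    (hznew : ∀ (j : Fin k) (i : ℕ), i ≤ n → z j ∉ (K i).vertexSet)
    (hKt : ∀ i, 1 ≤ i → i ≤ n → (Kt i).faces = (K i).faces ∪ starFaces P z)
    (φ : ∀ i, (K i).Homology 0 →ₗ[ZMod 2] (K (i+1)).Homology 0)
    (hφ : ∀ i, i < n → InducedHom (K i) (K (i+1)) 0 (φ i))
    (θ : ∀ i, (K i).Homology 0 →ₗ[ZMod 2] (Kt i).Homology 0)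
    (hθ : ∀ i, i ≤ n → InducedHom (K i) (Kt i) 0 (θ i))
    {e : ℕ} (h1e : 1 ≤ e) (hen : e ≤ n)
    (hsubd : (K e).faces ⊆ (Kt e).faces)
    (c : (K e).Chain 0)
    (hb : chainMap (K e) (Kt e) hsubd 0 c ∈ LinearMap.range ((Kt e).boundary 0)) :
    ∃ g₀ : (K 1).Chain 0,
      θ 1 ((K 1).hClass 0 g₀ (mem_cycles_zero _ _)) = 0 ∧
      (K e).hClass 0 c (mem_cycles_zero _ _) =
        comps φ h1e ((K 1).hClass 0 g₀ (mem_cycles_zero _ _)) := by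
  classical
  have h1n : 1 ≤ n := le_trans h1e hen
  obtain ⟨E, hE⟩ := hb
  set p : (Kt e).simplices 1 → Prop := fun σ => σ.1 ∈ starFaces P z with hp
  set eS := Finsupp.filter p E with heS
  set eK := Finsupp.filter (fun σ => ¬ p σ) E with heK
  have hsplit : eS + eK = E := Finsupp.filter_pos_add_filter_neg E p
  have hKsubKt1 : (K 1).faces ⊆ (Kt 1).faces := by
    rw [hKt 1 le_rfl h1n]; exact Set.subset_union_left
  have hKt1sub : (Kt 1).faces ⊆ (Kt e).faces := faces_mono n Kt hKtmono h1e hen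
  have hK1sub : (K 1).faces ⊆ (K e).faces := faces_mono n K hKmono h1e hen
  obtain ⟨eK', heK'⟩ : ∃ c₀ : (K e).Chain 1, chainMap (K e) (Kt e) hsubd 1 c₀ = eK := by
    refine exists_preimage_chain _ _ _ _ _ ?_
    intro σ hσ
    rw [heK, Finsupp.support_filter] at hσ
    have hnp : ¬ p σ := (Finset.mem_filter.mp hσ).2
    have h2 : σ.1 ∈ (K e).faces ∪ starFaces P z := by
      rw [← hKt e h1e hen]; exact σ.2.1
    exact h2.resolve_right hnp
  obtain ⟨eS', heS'⟩ : ∃ c₀ : (Kt 1).Chain 1, chainMap (Kt 1) (Kt e) hKt1sub 1 c₀ = eS := by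
    refine exists_preimage_chain _ _ _ _ _ ?_
    intro σ hσ
    rw [heS, Finsupp.support_filter] at hσ
    have hps : p σ := (Finset.mem_filter.mp hσ).2
    rw [hKt 1 le_rfl h1n]
    exact Or.inr hps
  set w := (Kt 1).boundary 0 eS' with hw
  have hA : chainMap (Kt 1) (Kt e) hKt1sub 0 w = (Kt e).boundary 0 eS := by
    rw [hw, ← boundary_chainMap, heS']
  have hB : (Kt e).boundary 0 eK = chainMap (K e) (Kt e) hsubd 0 ((K e).boundary 0 eK') := by
    rw [← heK', boundary_chainMap]
  have hC : (Kt e).boundary 0 eS + (Kt e).boundary 0 eK = chainMap (K e) (Kt e) hsubd 0 c := by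
    rw [← map_add, hsplit, hE]
  have hmain : chainMap (Kt 1) (Kt e) hKt1sub 0 w
      = chainMap (K e) (Kt e) hsubd 0 (c + (K e).boundary 0 eK') := by
    rw [hA, char2_cancel hC, hB, ← map_add]
  have hwsupp : ∀ σ ∈ w.support, σ.1 ∈ (K 1).faces := by
    intro σ hσ
    have hmem : smap (Kt 1) (Kt e) hKt1sub 0 σ ∈ (chainMap (Kt 1) (Kt e) hKt1sub 0 w).support := by
      rw [chainMap_eq, Finsupp.mapDomain_support_of_injective (smap_injective _ _ _ _)]
      exact Finset.mem_image_of_mem _ hσ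
    rw [hmain, chainMap_eq] at hmem
    obtain ⟨τ, hτ, hτeq⟩ := Finset.mem_image.mp (Finsupp.mapDomain_support hmem)
    have hval : τ.1 = σ.1 := congrArg (fun x => x.1) hτeq
    have hσKe : σ.1 ∈ (K e).faces := hval ▸ τ.2.1
    have h2 : σ.1 ∈ (K 1).faces ∪ starFaces P z := by
      rw [← hKt 1 le_rfl h1n]; exact σ.2.1
    rcases h2 with h2 | h2
    · exact h2
    · rcases starFaces_card_one h2 σ.2.2 with ⟨j0, hj0⟩ | ⟨j0, v, hv, hveq⟩
      · have hzf : ({z j0} : Finset α) ∈ (K e).faces := hj0 ▸ hσKe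
        exact absurd hzf (hznew j0 e hen)
      · rw [hveq]
        have hv1 : v ∈ (K 1).vertexSet := by
          rw [← hPunion]; exact Set.mem_iUnion.mpr ⟨j0, hv⟩
        exact hv1
  obtain ⟨g₀, hg₀⟩ := exists_preimage_chain (K 1) (Kt 1) hKsubKt1 0 w hwsupp
  obtain ⟨hsubθ1, hθ1spec⟩ := hθ 1 h1n
  obtain ⟨hcc, hspec⟩ := hθ1spec g₀ (mem_cycles_zero _ _)
  have hθg : θ 1 ((K 1).hClass 0 g₀ (mem_cycles_zero _ _)) = 0 := by
    rw [hspec]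
    have heq1 : (Kt 1).hClass 0 (chainMap (K 1) (Kt 1) hsubθ1 0 g₀) hcc
        = (Kt 1).hClass 0 w (mem_cycles_zero _ _) := hClass_congr _ 0 (by exact hg₀) _ _
    rw [heq1, hClass_eq_zero_iff]
    exact ⟨eS', hw.symm⟩
  have hkey : c + (K e).boundary 0 eK' = chainMap (K 1) (K e) hK1sub 0 g₀ := by
    apply chainMap_injective (K e) (Kt e) hsubd 0
    rw [← hmain, ← hg₀, chainMap_chainMap, chainMap_chainMap]
  have hsum : c + chainMap (K 1) (K e) hK1sub 0 g₀ = (K e).boundary 0 eK' := by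
    rw [← hkey, ← add_assoc, char2, zero_add]
  refine ⟨g₀, hθg, ?_⟩
  rw [comps_hClass n K hKmono φ hφ h1e hen g₀]
  rw [hClass_eq_iff]
  exact ⟨eK', hsum.symm⟩


/-- if `t ∈ H_0(K̃_b)` has persistence interval `(b, d)` with `d ≤ n`
finite, then there is a `0`-chain `c` of vertices of `K_b`, at least one of which lies
in `V_b ∖ V_{b-1}`, such that `t` is the class of `c` in `H_0(K̃_b)`, and the class
`s = ⟨c⟩ ∈ H_0(K_b)` satisfies `θ_{0,b}(s) = t` and has persistence interval `(b, d)`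
in `H_0(K_•)`. -/
theorem stmt10 {α : Type} [DecidableEq α] (n k : ℕ)
    (K Kt : ℕ → AbsSC α)
    (hK0 : (K 0).faces = ∅)
    (hKt0 : (Kt 0).faces = ∅)
    (hKmono : ∀ i, i < n → (K i).faces ⊆ (K (i + 1)).faces)
    (hKtmono : ∀ i, i < n → (Kt i).faces ⊆ (Kt (i + 1)).faces)
    (P : Fin k → Set α)
    (hPne : ∀ j, (P j).Nonempty)
    (hPdisj : Pairwise (Function.onFun Disjoint P))
    (hPunion : (⋃ j, P j) = (K 1).vertexSet)
    (z : Fin k → α)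
    (hzinj : Function.Injective z)
    (hznew : ∀ (j : Fin k) (i : ℕ), i ≤ n → z j ∉ (K i).vertexSet)
    (hKt : ∀ i, 1 ≤ i → i ≤ n → (Kt i).faces = (K i).faces ∪ starFaces P z)
    (φ : ∀ i : ℕ, (K i).Homology 0 →ₗ[ZMod 2] (K (i + 1)).Homology 0)
    (ψ : ∀ i : ℕ, (Kt i).Homology 0 →ₗ[ZMod 2] (Kt (i + 1)).Homology 0)
    (θ : ∀ i : ℕ, (K i).Homology 0 →ₗ[ZMod 2] (Kt i).Homology 0)
    (hφ : ∀ i, i < n → AbsSC.InducedHom (K i) (K (i + 1)) 0 (φ i))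
    (hψ : ∀ i, i < n → AbsSC.InducedHom (Kt i) (Kt (i + 1)) 0 (ψ i))
    (hθ : ∀ i, i ≤ n → AbsSC.InducedHom (K i) (Kt i) 0 (θ i))
    (hsq : ∀ i, i < n → (θ (i + 1)).comp (φ i) = (ψ i).comp (θ i))
    (b d : ℕ)
    (t : (Kt b).Homology 0)
    (ht : HasPersIntervalFin ψ n b d t) :
    ∃ (c : (K b).Chain 0) (hc : c ∈ (K b).cycles 0),
      (∃ σ ∈ c.support, ∃ v ∈ σ.1, v ∈ (K b).vertexSet \ (K (b - 1)).vertexSet) ∧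
      (∃ (hsub : (K b).faces ⊆ (Kt b).faces)
          (hc' : AbsSC.chainMap (K b) (Kt b) hsub 0 c ∈ (Kt b).cycles 0),
        t = (Kt b).hClass 0 (AbsSC.chainMap (K b) (Kt b) hsub 0 c) hc') ∧
      θ b ((K b).hClass 0 c hc) = t ∧
      HasPersIntervalFin φ n b d ((K b).hClass 0 c hc) := by
  classical
  obtain ⟨hb1, hbd, hdn, hborn, hlive, hdie⟩ := ht
  have hbn : b ≤ n := le_trans (le_of_lt hbd) hdn
  have h1n : 1 ≤ n := le_trans hb1 hbn
  have h1d : 1 ≤ d := le_trans hb1 (le_of_lt hbd)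
  have main : ∃ c : (K b).Chain 0,
      θ b ((K b).hClass 0 c (mem_cycles_zero _ _)) = t ∧
      comps φ (Nat.le_of_lt hbd) ((K b).hClass 0 c (mem_cycles_zero _ _)) ∈
        LinearMap.range (comps φ (Nat.le_trans (Nat.sub_le b 1) (Nat.le_of_lt hbd))) := by
    obtain ⟨c₁, hc₁⟩ := theta_surj n K Kt hKmono P hPne hPunion z hznew hKt θ hθ hb1 hbn t
    by_cases hb1' : b = 1
    · subst hb1'
      have hzero : comps ψ (Nat.le_of_lt hbd) t = 0 := by
        obtain ⟨u, hu⟩ := hdie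
        have hss : Subsingleton ((Kt (1 - 1)).Homology 0) :=
          homology_subsingleton (Kt 0) hKt0 0
        rw [← hu, Subsingleton.elim u 0, map_zero]
      have hcompsc₁ := comps_hClass n K hKmono φ hφ (Nat.le_of_lt hbd) hdn c₁
      obtain ⟨hsubθd, hθdspec⟩ := hθ d hdn
      obtain ⟨hcd, hspecd⟩ := hθdspec
        (chainMap (K 1) (K d) (faces_mono n K hKmono (Nat.le_of_lt hbd) hdn) 0 c₁)
        (mem_cycles_zero _ _)
      have hker : chainMap (K d) (Kt d) hsubθd 0
          (chainMap (K 1) (K d) (faces_mono n K hKmono (Nat.le_of_lt hbd) hdn) 0 c₁) ∈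
          LinearMap.range ((Kt d).boundary 0) := by
        rw [← hClass_eq_zero_iff (Kt d) 0 _ hcd, ← hspecd, ← hcompsc₁,
          nat_theta n K Kt φ ψ θ hsq (Nat.le_of_lt hbd) hdn, hc₁, hzero]
      obtain ⟨g₀, hθg, hcls⟩ := kernel_fact n K Kt hKmono hKtmono P hPunion z hznew hKt
        φ hφ θ hθ h1d hdn hsubθd _ hker
      refine ⟨c₁ + g₀, ?_, ?_⟩
      · rw [hClass_add (K 1) 0 c₁ g₀ (mem_cycles_zero _ _) (mem_cycles_zero _ _)
          (mem_cycles_zero _ _), map_add, hc₁, hθg, add_zero]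
      · rw [hClass_add (K 1) 0 c₁ g₀ (mem_cycles_zero _ _) (mem_cycles_zero _ _)
          (mem_cycles_zero _ _), map_add, hcompsc₁, hcls]
        refine ⟨0, ?_⟩
        rw [map_zero]
        exact (char2 _).symm
    · have hb11 : 1 ≤ b - 1 := by omega
      have hb1n : b - 1 ≤ n := by omega
      have hbd' : b ≤ d := Nat.le_of_lt hbd
      have hX : b - 1 ≤ d := Nat.le_trans (Nat.sub_le b 1) hbd'
      obtain ⟨u, hu⟩ := hdie
      obtain ⟨c', hc'⟩ := theta_surj n K Kt hKmono P hPne hPunion z hznew hKt θ hθ hb11 hb1n u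
      set A := chainMap (K b) (K d) (faces_mono n K hKmono hbd' hdn) 0 c₁ with hA
      set B := chainMap (K (b - 1)) (K d) (faces_mono n K hKmono hX hdn) 0 c' with hB
      have hcompsA := comps_hClass n K hKmono φ hφ hbd' hdn c₁
      have hcompsB := comps_hClass n K hKmono φ hφ hX hdn c'
      obtain ⟨hsubθd, hθdspec⟩ := hθ d hdn
      obtain ⟨hcd, hspecd⟩ := hθdspec (A + B) (mem_cycles_zero _ _)
      have hker : chainMap (K d) (Kt d) hsubθd 0 (A + B) ∈
          LinearMap.range ((Kt d).boundary 0) := by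
        rw [← hClass_eq_zero_iff (Kt d) 0 _ hcd, ← hspecd,
          hClass_add (K d) 0 A B (mem_cycles_zero _ _) (mem_cycles_zero _ _)
            (mem_cycles_zero _ _), map_add, ← hcompsA, ← hcompsB,
          nat_theta n K Kt φ ψ θ hsq hbd' hdn, nat_theta n K Kt φ ψ θ hsq hX hdn,
          hc₁, hc', hu]
        exact char2 _
      obtain ⟨g₀, hθg, hcls⟩ := kernel_fact n K Kt hKmono hKtmono P hPunion z hznew hKt
        φ hφ θ hθ h1d hdn hsubθd (A + B) hker
      refine ⟨c₁, hc₁, ?_⟩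
      refine ⟨(K (b - 1)).hClass 0 c' (mem_cycles_zero _ _) +
        comps φ hb11 ((K 1).hClass 0 g₀ (mem_cycles_zero _ _)), ?_⟩
      rw [map_add, comps_comps φ hb11 (Nat.le_trans (Nat.sub_le b 1) (Nat.le_of_lt hbd))]
      have h1 : comps φ (Nat.le_trans hb11 (Nat.le_trans (Nat.sub_le b 1) (Nat.le_of_lt hbd)))
          ((K 1).hClass 0 g₀ (mem_cycles_zero _ _)) =
          (K d).hClass 0 (A + B) (mem_cycles_zero _ _) := hcls.symm
      rw [h1, hClass_add (K d) 0 A B (mem_cycles_zero _ _) (mem_cycles_zero _ _)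
        (mem_cycles_zero _ _), ← hcompsA, ← hcompsB, add_left_comm, char2, add_zero]
  obtain ⟨c, hrep, hdeath⟩ := main
  refine ⟨c, mem_cycles_zero _ _, ?_, ?_, hrep, ?_⟩
  · by_contra hnew
    push_neg at hnew
    have hsupp : ∀ σ ∈ c.support, σ.1 ∈ (K (b - 1)).faces := by
      intro σ hσ
      obtain ⟨v, hv⟩ := Finset.card_eq_one.mp σ.2.2
      have hvS : v ∈ σ.1 := by rw [hv]; exact Finset.mem_singleton_self v
      have hvb : v ∈ (K b).vertexSet := by
        show {v} ∈ (K b).faces; rw [← hv]; exact σ.2.1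
      have hnv := hnew σ hσ v hvS
      have hvb1 : v ∈ (K (b - 1)).vertexSet := by
        by_contra hh; exact hnv ⟨hvb, hh⟩
      rw [hv]; exact hvb1
    obtain ⟨c₀, hc₀⟩ := exists_preimage_chain (K (b - 1)) (K b)
      (faces_mono n K hKmono (Nat.sub_le b 1) hbn) 0 c hsupp
    have hcomps := comps_hClass n K hKmono φ hφ (Nat.sub_le b 1) hbn c₀
    have hsrange : (K b).hClass 0 c (mem_cycles_zero _ _) =
        comps φ (Nat.sub_le b 1) ((K (b - 1)).hClass 0 c₀ (mem_cycles_zero _ _)) := by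
      rw [hcomps]; exact hClass_congr _ 0 hc₀.symm _ _
    apply hborn
    refine ⟨θ (b - 1) ((K (b - 1)).hClass 0 c₀ (mem_cycles_zero _ _)), ?_⟩
    rw [← nat_theta n K Kt φ ψ θ hsq (Nat.sub_le b 1) hbn, ← hsrange, hrep]
  · obtain ⟨hsubθb, hθbspec⟩ := hθ b hbn
    obtain ⟨hc', hspec⟩ := hθbspec c (mem_cycles_zero _ _)
    exact ⟨hsubθb, hc', by rw [← hrep, hspec]⟩
  · refine ⟨hb1, hbd, hdn, ?_, ?_, hdeath⟩
    · rintro ⟨x, hx⟩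
      apply hborn
      refine ⟨θ (b - 1) x, ?_⟩
      rw [← nat_theta n K Kt φ ψ θ hsq (Nat.sub_le b 1) hbn, hx, hrep]
    · intro d' hd' hd'd
      rintro ⟨x, hx⟩
      have hd'n : d' ≤ n := by omega
      refine hlive d' hd' hd'd ⟨θ (b - 1) x, ?_⟩
      rw [← nat_theta n K Kt φ ψ θ hsq (Nat.le_trans (Nat.sub_le b 1) hd') hd'n, hx,
        nat_theta n K Kt φ ψ θ hsq hd' hd'n, hrep]
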